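/- The SL(2,ℂ)-orbit of the Lagrangian span{X³, XY²} is exactly the set of Lagrangians W of V such that there exists [a:b] ∈ ℂℙ¹ with bX − aY dividing every element of W, but there exists no [a':b'] ∈ ℂℙ¹ with (b'X − a'Y)² dividing every element of W. -/

import Mathlib

noncomputable section

open MvPolynomial

/-- The polynomial ring `ℂ[X,Y]`. -/
abbrev P2 : Type := MvPolynomial (Fin 2) ℂ

/-- The variable `X`. -/
def Xv : P2 := X 0

/-- The variable `Y`. -/
def Yv : P2 := X 1

/-- `V`: the space of homogeneous cubic polynomials in `X, Y`. -/
def Vcubic : Submodule ℂ P2 := homogeneousSubmodule (Fin 2) ℂ 3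

/-- The coefficient of `X^i Y^j`. -/
def cf (i j : ℕ) (p : P2) : ℂ := coeff (Finsupp.single 0 i + Finsupp.single 1 j) p

/-- The alternating bilinear form `ω` with `ω(X³,Y³) = 1`, `ω(X²Y,XY²) = -1/3`,
all other pairings of distinct basis vectors being `0`. -/
def omegaForm (p q : P2) : ℂ :=
  cf 3 0 p * cf 0 3 q - cf 0 3 p * cf 3 0 q
    - (1 / 3) * (cf 2 1 p * cf 1 2 q - cf 1 2 p * cf 2 1 q)

/-- The linear form `b X - a Y` associated to the point `[a : b] ∈ ℂℙ¹`. -/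
def lf (a b : ℂ) : P2 := C b * Xv - C a * Yv

/-- A Lagrangian of `V`: a 2-dimensional subspace contained in `V` on which `ω` vanishes. -/
def IsLagrangian (W : Submodule ℂ P2) : Prop :=
  W ≤ Vcubic ∧ Module.finrank ℂ W = 2 ∧ ∀ p ∈ W, ∀ q ∈ W, omegaForm p q = 0

/-- A perfect cube: a nonzero element of the form `c • (bX - aY)³`. -/
def IsPerfectCube (p : P2) : Prop :=
  ∃ c a b : ℂ, c ≠ 0 ∧ (a ≠ 0 ∨ b ≠ 0) ∧ p = C c * lf a b ^ 3

/-- The action of `SL(2,ℂ)` on `ℂ[X,Y]` by linear substitution of the variables. -/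
def subst (g : Matrix.SpecialLinearGroup (Fin 2) ℂ) : P2 →ₐ[ℂ] P2 :=
  aeval (fun i => C (g.1 i 0) * Xv + C (g.1 i 1) * Yv)

/-- The induced action of `SL(2,ℂ)` on subspaces of `ℂ[X,Y]`. -/
def mapAct (g : Matrix.SpecialLinearGroup (Fin 2) ℂ) (W : Submodule ℂ P2) :
    Submodule ℂ P2 :=
  W.map (subst g).toLinearMap

/-- The `SL(2,ℂ)`-orbit of a subspace. -/
def slOrbit (W₀ : Submodule ℂ P2) : Set (Submodule ℂ P2) := {W | ∃ g, W = mapAct g W₀}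

/-- The Lagrangian `span{X³, X²Y}`. -/
def L₁ : Submodule ℂ P2 := Submodule.span ℂ {Xv ^ 3, Xv ^ 2 * Yv}

/-- The Lagrangian `span{X³, XY²}`. -/
def L₂ : Submodule ℂ P2 := Submodule.span ℂ {Xv ^ 3, Xv * Yv ^ 2}

/-- The Lagrangian `span{X²Y, X³ + Y³}`. -/
def L₃ : Submodule ℂ P2 := Submodule.span ℂ {Xv ^ 2 * Yv, Xv ^ 3 + Yv ^ 3}

/- ===== auxiliary development ===== -/

abbrev SL2 := Matrix.SpecialLinearGroup (Fin 2) ℂ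

lemma det_eq (g : SL2) : g.1 0 0 * g.1 1 1 - g.1 0 1 * g.1 1 0 = 1 := by
  have := g.2
  rw [Matrix.det_fin_two] at this
  linear_combination this

def mkSL (a b c d : ℂ) (h : a * d - b * c = 1) : SL2 :=
  ⟨!![a, b; c, d], by rw [Matrix.det_fin_two_of]; linear_combination h⟩

/-! ### coefficients and the combo normal form -/

def combo (α β γ δ : ℂ) : P2 :=
  C α * Xv ^ 3 + C β * (Xv ^ 2 * Yv) + C γ * (Xv * Yv ^ 2) + C δ * Yv ^ 3

lemma combo_eq_monomial (α β γ δ : ℂ) :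
    combo α β γ δ =
      monomial (Finsupp.single 0 3) α
      + monomial (Finsupp.single 0 2 + Finsupp.single 1 1) β
      + monomial (Finsupp.single 0 1 + Finsupp.single 1 2) γ
      + monomial (Finsupp.single 1 3) δ := by
  simp [combo, Xv, Yv, X_pow_eq_monomial, X, C_mul_monomial, monomial_mul, monomial_pow,
    Finsupp.smul_single]

lemma cf_combo30 (α β γ δ : ℂ) : cf 3 0 (combo α β γ δ) = α := by
  rw [combo_eq_monomial]
  simp [cf, coeff_monomial, Finsupp.ext_iff, Fin.forall_fin_two, Finsupp.single_apply]
lemma cf_combo21 (α β γ δ : ℂ) : cf 2 1 (combo α β γ δ) = β := by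
  rw [combo_eq_monomial]
  simp [cf, coeff_monomial, Finsupp.ext_iff, Fin.forall_fin_two, Finsupp.single_apply]
lemma cf_combo12 (α β γ δ : ℂ) : cf 1 2 (combo α β γ δ) = γ := by
  rw [combo_eq_monomial]
  simp [cf, coeff_monomial, Finsupp.ext_iff, Fin.forall_fin_two, Finsupp.single_apply]
lemma cf_combo03 (α β γ δ : ℂ) : cf 0 3 (combo α β γ δ) = δ := by
  rw [combo_eq_monomial]
  simp [cf, coeff_monomial, Finsupp.ext_iff, Fin.forall_fin_two, Finsupp.single_apply]

lemma deg2 (d : Fin 2 →₀ ℕ) : d.degree = d 0 + d 1 := by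
  rw [Finsupp.degree_apply, Finset.sum_subset (Finset.subset_univ _)]
  · exact Fin.sum_univ_two _
  · intro i _ hi; exact Finsupp.notMem_support_iff.mp hi

lemma fs_decomp (m : Fin 2 →₀ ℕ) : m = Finsupp.single 0 (m 0) + Finsupp.single 1 (m 1) := by
  ext i; fin_cases i <;> simp [Finsupp.single_apply]

lemma combo_mem_Vcubic (α β γ δ : ℂ) : combo α β γ δ ∈ Vcubic := by
  rw [combo_eq_monomial]
  refine Submodule.add_mem _ (Submodule.add_mem _ (Submodule.add_mem _ ?_ ?_) ?_) ?_ <;>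
    exact (mem_homogeneousSubmodule _ _).mpr
      (isHomogeneous_monomial _ (by simp [deg2, Finsupp.single_apply]))

lemma mem_Vcubic_repr {p : P2} (hp : p ∈ Vcubic) :
    p = combo (cf 3 0 p) (cf 2 1 p) (cf 1 2 p) (cf 0 3 p) := by
  rw [Vcubic, mem_homogeneousSubmodule] at hp
  apply MvPolynomial.ext
  intro m
  by_cases hdeg : m.degree = 3
  · have hm01 : m 0 + m 1 = 3 := by rw [← deg2, hdeg]
    have hm := fs_decomp m
    have : (m 0 = 3 ∧ m 1 = 0) ∨ (m 0 = 2 ∧ m 1 = 1) ∨ (m 0 = 1 ∧ m 1 = 2) ∨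
        (m 0 = 0 ∧ m 1 = 3) := by omega
    rw [combo_eq_monomial]
    obtain ⟨h0, h1⟩ | ⟨h0, h1⟩ | ⟨h0, h1⟩ | ⟨h0, h1⟩ := this <;>
      rw [h0, h1] at hm <;> rw [hm] <;>
      simp [coeff_monomial, cf, Finsupp.ext_iff, Fin.forall_fin_two, Finsupp.single_apply]
  · have h30 : (Finsupp.single (0 : Fin 2) 3 : Fin 2 →₀ ℕ) ≠ m := by
      rintro rfl; exact hdeg (by simp [deg2, Finsupp.single_apply])
    have h21 : (Finsupp.single (0 : Fin 2) 2 + Finsupp.single 1 1 : Fin 2 →₀ ℕ) ≠ m := by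
      rintro rfl; exact hdeg (by simp [deg2, Finsupp.single_apply])
    have h12 : (Finsupp.single (0 : Fin 2) 1 + Finsupp.single 1 2 : Fin 2 →₀ ℕ) ≠ m := by
      rintro rfl; exact hdeg (by simp [deg2, Finsupp.single_apply])
    have h03 : (Finsupp.single (1 : Fin 2) 3 : Fin 2 →₀ ℕ) ≠ m := by
      rintro rfl; exact hdeg (by simp [deg2, Finsupp.single_apply])
    rw [hp.coeff_eq_zero hdeg, combo_eq_monomial]
    simp [coeff_monomial, h30, h21, h12, h03]

lemma combo_add (α β γ δ α' β' γ' δ' : ℂ) :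
    combo α β γ δ + combo α' β' γ' δ' = combo (α + α') (β + β') (γ + γ') (δ + δ') := by
  simp only [combo, map_add]; ring

lemma smul_combo (c α β γ δ : ℂ) :
    c • combo α β γ δ = combo (c * α) (c * β) (c * γ) (c * δ) := by
  simp only [smul_eq_C_mul, combo, map_mul]; ring

lemma combo_zero : combo 0 0 0 0 = 0 := by simp [combo]

lemma combo_eq_zero_iff {α β γ δ : ℂ} :
    combo α β γ δ = 0 ↔ α = 0 ∧ β = 0 ∧ γ = 0 ∧ δ = 0 := by
  constructor
  · intro h
    refine ⟨?_, ?_, ?_, ?_⟩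
    · have := congrArg (cf 3 0) h; rwa [cf_combo30, show cf 3 0 0 = 0 by simp [cf]] at this
    · have := congrArg (cf 2 1) h; rwa [cf_combo21, show cf 2 1 0 = 0 by simp [cf]] at this
    · have := congrArg (cf 1 2) h; rwa [cf_combo12, show cf 1 2 0 = 0 by simp [cf]] at this
    · have := congrArg (cf 0 3) h; rwa [cf_combo03, show cf 0 3 0 = 0 by simp [cf]] at this
  · rintro ⟨rfl, rfl, rfl, rfl⟩; exact combo_zero

lemma omega_combo (α β γ δ α' β' γ' δ' : ℂ) :
    omegaForm (combo α β γ δ) (combo α' β' γ' δ') =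
      α * δ' - δ * α' - (1 / 3) * (β * γ' - γ * β') := by
  simp [omegaForm, cf_combo30, cf_combo21, cf_combo12, cf_combo03]
/-! ### the substitution action -/

lemma subst_X (g : SL2) (i : Fin 2) :
    subst g (X i) = C (g.1 i 0) * Xv + C (g.1 i 1) * Yv := by
  simp [subst]

lemma subst_Xv (g : SL2) : subst g Xv = C (g.1 0 0) * Xv + C (g.1 0 1) * Yv := subst_X g 0
lemma subst_Yv (g : SL2) : subst g Yv = C (g.1 1 0) * Xv + C (g.1 1 1) * Yv := subst_X g 1

lemma subst_C (g : SL2) (r : ℂ) : subst g (C r) = C r := by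
  simp [subst, algebraMap_eq]

lemma subst_subst (g h : SL2) (p : P2) : subst g (subst h p) = subst (h * g) p := by
  have : (subst g).comp (subst h) = subst (h * g) := by
    apply MvPolynomial.algHom_ext
    intro i
    simp only [AlgHom.coe_comp, Function.comp_apply, subst_X, map_add, map_mul, subst_Xv,
      subst_Yv, algHom_C, Matrix.SpecialLinearGroup.coe_mul, Matrix.mul_apply,
      Fin.sum_univ_two, map_mul, algebraMap_eq]
    ring
  calc subst g (subst h p) = ((subst g).comp (subst h)) p := rfl
    _ = subst (h * g) p := by rw [this]

lemma subst_one (p : P2) : subst 1 p = p := by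
  have : subst 1 = AlgHom.id ℂ P2 := by
    apply MvPolynomial.algHom_ext
    intro i
    fin_cases i <;> simp [subst_X, Xv, Yv]
  rw [this]; rfl

lemma subst_inv_subst (g : SL2) (p : P2) : subst g⁻¹ (subst g p) = p := by
  rw [subst_subst, mul_inv_cancel, subst_one]

lemma subst_subst_inv (g : SL2) (p : P2) : subst g (subst g⁻¹ p) = p := by
  rw [subst_subst, inv_mul_cancel, subst_one]

def substEquiv (g : SL2) : P2 ≃ₐ[ℂ] P2 :=
  AlgEquiv.ofAlgHom (subst g) (subst g⁻¹)
    (by ext p : 1; simp [AlgHom.coe_comp, Function.comp_apply, subst_subst, subst_one])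
    (by ext p : 1; simp [AlgHom.coe_comp, Function.comp_apply, subst_subst, subst_one])

lemma mapAct_mapAct (g h : SL2) (W : Submodule ℂ P2) :
    mapAct g (mapAct h W) = mapAct (h * g) W := by
  rw [mapAct, mapAct, mapAct, ← Submodule.map_comp]
  refine congrArg (fun f => Submodule.map f W) ?_
  apply LinearMap.ext
  intro p
  exact subst_subst g h p

lemma mapAct_one (W : Submodule ℂ P2) : mapAct 1 W = W := by
  rw [mapAct]
  have : (subst 1).toLinearMap = LinearMap.id (M := P2) (R := ℂ) := by
    apply LinearMap.ext; intro p; exact subst_one p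
  rw [this, Submodule.map_id]

lemma finrank_mapAct (g : SL2) (W : Submodule ℂ P2) :
    Module.finrank ℂ (mapAct g W) = Module.finrank ℂ W := by
  have : mapAct g W = W.map ((substEquiv g).toLinearEquiv : P2 →ₗ[ℂ] P2) := rfl
  rw [this, LinearEquiv.finrank_map_eq]

lemma mem_mapAct {g : SL2} {W : Submodule ℂ P2} {p : P2} :
    p ∈ mapAct g W ↔ ∃ q ∈ W, p = subst g q := by
  constructor
  · rintro ⟨q, hq, rfl⟩; exact ⟨q, hq, rfl⟩
  · rintro ⟨q, hq, rfl⟩; exact ⟨q, hq, rfl⟩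

lemma subst_lf (g : SL2) (a b : ℂ) :
    subst g (lf a b) =
      lf (a * g.1 1 1 - b * g.1 0 1) (b * g.1 0 0 - a * g.1 1 0) := by
  simp only [lf, map_sub, map_mul, subst_C, subst_Xv, subst_Yv]
  ring

lemma subst_combo (g : SL2) (α β γ δ : ℂ) :
    subst g (combo α β γ δ) =
      combo (α * g.1 0 0 ^ 3 + β * g.1 0 0 ^ 2 * g.1 1 0 + γ * g.1 0 0 * g.1 1 0 ^ 2
              + δ * g.1 1 0 ^ 3)
            (3 * α * g.1 0 0 ^ 2 * g.1 0 1
              + β * (g.1 0 0 ^ 2 * g.1 1 1 + 2 * g.1 0 0 * g.1 0 1 * g.1 1 0)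
              + γ * (2 * g.1 0 0 * g.1 1 0 * g.1 1 1 + g.1 0 1 * g.1 1 0 ^ 2)
              + 3 * δ * g.1 1 0 ^ 2 * g.1 1 1)
            (3 * α * g.1 0 0 * g.1 0 1 ^ 2
              + β * (2 * g.1 0 0 * g.1 0 1 * g.1 1 1 + g.1 0 1 ^ 2 * g.1 1 0)
              + γ * (g.1 0 0 * g.1 1 1 ^ 2 + 2 * g.1 0 1 * g.1 1 0 * g.1 1 1)
              + 3 * δ * g.1 1 0 * g.1 1 1 ^ 2)
            (α * g.1 0 1 ^ 3 + β * g.1 0 1 ^ 2 * g.1 1 1 + γ * g.1 0 1 * g.1 1 1 ^ 2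
              + δ * g.1 1 1 ^ 3) := by
  simp only [combo, map_add, map_mul, map_pow, subst_C, subst_Xv, subst_Yv, map_ofNat]
  ring

lemma omega_subst (g : SL2) (α β γ δ α' β' γ' δ' : ℂ) :
    omegaForm (subst g (combo α β γ δ)) (subst g (combo α' β' γ' δ')) =
      omegaForm (combo α β γ δ) (combo α' β' γ' δ') := by
  have h := det_eq g
  rw [subst_combo, subst_combo, omega_combo, omega_combo]
  linear_combination (((g.1 0 0 * g.1 1 1 - g.1 0 1 * g.1 1 0) ^ 2
    + (g.1 0 0 * g.1 1 1 - g.1 0 1 * g.1 1 0) + 1)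
    * (α * δ' - δ * α' - (1 / 3) * (β * γ' - γ * β'))) * h
/-! ### evaluation and primality -/

lemma eval_Xv (u v : ℂ) : eval ![u, v] Xv = u := by simp [Xv]
lemma eval_Yv (u v : ℂ) : eval ![u, v] Yv = v := by simp [Yv]
lemma eval_lf (u v a b : ℂ) : eval ![u, v] (lf a b) = b * u - a * v := by
  simp [lf, eval_Xv, eval_Yv]
lemma eval_lf_self (a b : ℂ) : eval ![a, b] (lf a b) = 0 := by
  rw [eval_lf]; ring
lemma eval_combo (u v α β γ δ : ℂ) :
    eval ![u, v] (combo α β γ δ) = α * u ^ 3 + β * (u ^ 2 * v) + γ * (u * v ^ 2) + δ * v ^ 3 := by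
  simp [combo, eval_Xv, eval_Yv]
lemma lf_dvd_eval_zero {a b : ℂ} {p : P2} (h : lf a b ∣ p) : eval ![a, b] p = 0 := by
  obtain ⟨r, rfl⟩ := h
  rw [map_mul, eval_lf_self, zero_mul]
lemma lf_ne_zero {a b : ℂ} (hab : a ≠ 0 ∨ b ≠ 0) : lf a b ≠ 0 := by
  intro h
  rcases hab with ha | hb
  · have := congrArg (eval ![0, -1]) h
    rw [eval_lf] at this; simp at this; exact ha this
  · have := congrArg (eval ![1, 0]) h
    rw [eval_lf] at this; simp at this; exact hb this

lemma lf01 : lf 0 1 = Xv := by simp [lf]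

lemma prime_Xv : Prime Xv := by
  rw [← MulEquiv.prime_iff (finSuccEquiv ℂ 1).toMulEquiv]
  have : (finSuccEquiv ℂ 1).toMulEquiv Xv = Polynomial.X := by
    simp [Xv, finSuccEquiv_X_zero]
  rw [this]
  exact Polynomial.prime_X

lemma prime_lf {a b : ℂ} (hab : a ≠ 0 ∨ b ≠ 0) : Prime (lf a b) := by
  obtain ⟨u, v, huv⟩ : ∃ u v : ℂ, b * u + a * v = 1 := by
    rcases ne_or_eq b 0 with hb | rfl
    · exact ⟨1 / b, 0, by field_simp; ring⟩
    · rcases hab with ha | h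
      · exact ⟨0, 1 / a, by field_simp; ring⟩
      · exact absurd rfl h
  have hdet : b * u - (-a) * v = 1 := by linear_combination huv
  set g := mkSL b (-a) v u hdet with hg
  have hx : subst g Xv = lf a b := by
    rw [subst_Xv]
    have e0 : g.1 0 0 = b := rfl
    have e1 : g.1 0 1 = -a := rfl
    rw [e0, e1, lf]
    simp only [map_neg]
    ring
  have hp := prime_Xv
  rw [← MulEquiv.prime_iff (substEquiv g).toMulEquiv] at hp
  have : (substEquiv g).toMulEquiv Xv = lf a b := hx
  rwa [this] at hp

lemma pderiv0_lf (a b : ℂ) : pderiv 0 (lf a b) = C b := by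
  simp [lf, Xv, Yv, pderiv_C_mul, pderiv_X]
lemma pderiv1_lf (a b : ℂ) : pderiv 1 (lf a b) = -C a := by
  simp [lf, Xv, Yv, pderiv_C_mul, pderiv_X]

lemma sq_lf_not_dvd {a b a' b' : ℂ} (hab : a ≠ 0 ∨ b ≠ 0) :
    ¬ (lf a' b' ^ 2 ∣ lf a b) := by
  rintro ⟨r, hr⟩
  have key : ∀ i : Fin 2, eval ![a', b'] (pderiv i (lf a b)) = 0 := by
    intro i
    rw [hr, pow_two, mul_assoc, pderiv_mul]
    simp [eval_lf_self]
  have h0 := key 0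
  have h1 := key 1
  rw [pderiv0_lf] at h0
  rw [pderiv1_lf] at h1
  simp at h0 h1
  rcases hab with ha | hb
  · exact ha h1
  · exact hb h0
/-! ### linear algebra helpers -/

instance : FiniteDimensional ℂ Vcubic := by
  have hle : Vcubic ≤ Submodule.span ℂ ({Xv ^ 3, Xv ^ 2 * Yv, Xv * Yv ^ 2, Yv ^ 3} : Set P2) := by
    intro p hp
    rw [mem_Vcubic_repr hp, combo]
    refine Submodule.add_mem _ (Submodule.add_mem _ (Submodule.add_mem _ ?_ ?_) ?_) ?_ <;>
      rw [← smul_eq_C_mul] <;>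
      exact Submodule.smul_mem _ _ (Submodule.subset_span (by simp))
  have : FiniteDimensional ℂ
      (Submodule.span ℂ ({Xv ^ 3, Xv ^ 2 * Yv, Xv * Yv ^ 2, Yv ^ 3} : Set P2)) :=
    FiniteDimensional.span_of_finite ℂ (Set.toFinite _)
  exact Submodule.finiteDimensional_of_le hle

lemma finrank_span_pair {x y : P2} (h : LinearIndependent ℂ ![x, y]) :
    Module.finrank ℂ (Submodule.span ℂ ({x, y} : Set P2)) = 2 := by
  rw [show ({x, y} : Set P2) = Set.range ![x, y] from (Matrix.range_cons_cons_empty x y _).symm,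
    finrank_span_eq_card h]
  simp

lemma mem_span_pair' {x y z : P2} :
    z ∈ Submodule.span ℂ ({x, y} : Set P2) ↔ ∃ s t : ℂ, s • x + t • y = z :=
  Submodule.mem_span_pair

lemma span_pair_add_smul_left (x y : P2) (c : ℂ) :
    Submodule.span ℂ ({x, c • x + y} : Set P2) = Submodule.span ℂ ({x, y} : Set P2) := by
  apply le_antisymm
  · rw [Submodule.span_le]
    rintro z hz
    simp only [Set.mem_insert_iff, Set.mem_singleton_iff] at hz
    rcases hz with rfl | rfl
    · exact Submodule.subset_span (by simp)
    · exact Submodule.add_mem _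
        (Submodule.smul_mem _ _ (Submodule.subset_span (by simp)))
        (Submodule.subset_span (by simp))
  · rw [Submodule.span_le]
    rintro z hz
    simp only [Set.mem_insert_iff, Set.mem_singleton_iff] at hz
    rcases hz with rfl | rfl
    · exact Submodule.subset_span (by simp)
    · have hx : x ∈ Submodule.span ℂ ({x, c • x + z} : Set P2) :=
        Submodule.subset_span (by simp)
      have hy : c • x + z ∈ Submodule.span ℂ ({x, c • x + z} : Set P2) :=
        Submodule.subset_span (by simp)
      have := Submodule.sub_mem _ hy (Submodule.smul_mem _ c hx)
      simpa using this

lemma span_pair_smul_right (x y : P2) {c : ℂ} (hc : c ≠ 0) :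
    Submodule.span ℂ ({x, c • y} : Set P2) = Submodule.span ℂ ({x, y} : Set P2) := by
  apply le_antisymm
  · rw [Submodule.span_le]
    rintro z hz
    simp only [Set.mem_insert_iff, Set.mem_singleton_iff] at hz
    rcases hz with rfl | rfl
    · exact Submodule.subset_span (by simp)
    · exact Submodule.smul_mem _ _ (Submodule.subset_span (by simp))
  · rw [Submodule.span_le]
    rintro z hz
    simp only [Set.mem_insert_iff, Set.mem_singleton_iff] at hz
    rcases hz with rfl | rfl
    · exact Submodule.subset_span (by simp)
    · have : c • z ∈ Submodule.span ℂ ({x, c • z} : Set P2) :=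
        Submodule.subset_span (by simp)
      have := Submodule.smul_mem _ c⁻¹ this
      rwa [smul_smul, inv_mul_cancel₀ hc, one_smul] at this

/-! ### facts about `L₂` -/

lemma combo1000 : combo 1 0 0 0 = Xv ^ 3 := by simp [combo]
lemma combo0010 : combo 0 0 1 0 = Xv * Yv ^ 2 := by simp [combo]

lemma L2_eq : L₂ = Submodule.span ℂ ({combo 1 0 0 0, combo 0 0 1 0} : Set P2) := by
  rw [L₂, combo1000, combo0010]

lemma mem_L2 {x : P2} : x ∈ L₂ ↔ ∃ s t : ℂ, x = combo s 0 t 0 := by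
  rw [L2_eq, mem_span_pair']
  constructor
  · rintro ⟨s, t, rfl⟩
    exact ⟨s, t, by rw [smul_combo, smul_combo, combo_add]; norm_num⟩
  · rintro ⟨s, t, rfl⟩
    exact ⟨s, t, by rw [smul_combo, smul_combo, combo_add]; norm_num⟩

lemma isLagrangian_L2 : IsLagrangian L₂ := by
  refine ⟨?_, ?_, ?_⟩
  · intro p hp
    obtain ⟨s, t, rfl⟩ := mem_L2.mp hp
    exact combo_mem_Vcubic _ _ _ _
  · rw [L2_eq]
    apply finrank_span_pair
    rw [LinearIndependent.pair_iff]
    intro s t hst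
    rw [smul_combo, smul_combo, combo_add] at hst
    norm_num at hst
    obtain ⟨hs, ht⟩ := combo_eq_zero_iff.mp hst |>.imp id (fun h => h.2.1)
    exact ⟨hs, ht⟩
  · intro p hp q hq
    obtain ⟨s, t, rfl⟩ := mem_L2.mp hp
    obtain ⟨s', t', rfl⟩ := mem_L2.mp hq
    rw [omega_combo]
    ring

lemma isLagrangian_mapAct {W : Submodule ℂ P2} (hW : IsLagrangian W) (g : SL2) :
    IsLagrangian (mapAct g W) := by
  obtain ⟨hle, hrk, hω⟩ := hW
  refine ⟨?_, ?_, ?_⟩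
  · intro p hp
    obtain ⟨q, hq, rfl⟩ := mem_mapAct.mp hp
    rw [mem_Vcubic_repr (hle hq), subst_combo]
    exact combo_mem_Vcubic _ _ _ _
  · rw [finrank_mapAct]; exact hrk
  · intro p hp q hq
    obtain ⟨p₀, hp₀, rfl⟩ := mem_mapAct.mp hp
    obtain ⟨q₀, hq₀, rfl⟩ := mem_mapAct.mp hq
    have e1 := mem_Vcubic_repr (hle hp₀)
    have e2 := mem_Vcubic_repr (hle hq₀)
    rw [e1, e2, omega_subst, ← e1, ← e2]
    exact hω p₀ hp₀ q₀ hq₀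
/-! ### the forward direction -/

lemma combo_congr {a b c d a' b' c' d' : ℂ} (h1 : a = a') (h2 : b = b') (h3 : c = c')
    (h4 : d = d') : combo a b c d = combo a' b' c' d' := by
  rw [h1, h2, h3, h4]

lemma subst_Xv_lf (g : SL2) : subst g Xv = lf (-(g.1 0 1)) (g.1 0 0) := by
  rw [subst_Xv, lf]
  simp only [map_neg]
  ring

lemma subst_Yv_lf (g : SL2) : subst g Yv = lf (-(g.1 1 1)) (g.1 1 0) := by
  rw [subst_Yv, lf]
  simp only [map_neg]
  ring

lemma row_ne (g : SL2) : -(g.1 0 1) ≠ 0 ∨ g.1 0 0 ≠ 0 := by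
  by_contra hcon
  push_neg at hcon
  obtain ⟨h1, h2⟩ := hcon
  have hd := det_eq g
  rw [h2, neg_eq_zero.mp h1] at hd
  simp at hd

lemma forward_root (g : SL2) :
    ∃ a b : ℂ, (a ≠ 0 ∨ b ≠ 0) ∧ ∀ p ∈ mapAct g L₂, lf a b ∣ p := by
  refine ⟨-(g.1 0 1), g.1 0 0, row_ne g, ?_⟩
  intro p hp
  obtain ⟨q, hq, rfl⟩ := mem_mapAct.mp hp
  obtain ⟨s, t, rfl⟩ := mem_L2.mp hq
  have hfac : combo s 0 t 0 = Xv * (C s * Xv ^ 2 + C t * Yv ^ 2) := by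
    simp only [combo, map_zero, zero_mul, add_zero, zero_add]
    ring
  rw [hfac, map_mul, subst_Xv_lf]
  exact dvd_mul_right _ _

lemma mem_L2_left : Xv ^ 3 ∈ L₂ := Submodule.subset_span (by simp)
lemma mem_L2_right : Xv * Yv ^ 2 ∈ L₂ := Submodule.subset_span (by simp)

lemma forward_nodouble (g : SL2) :
    ¬ ∃ a' b' : ℂ, (a' ≠ 0 ∨ b' ≠ 0) ∧ ∀ p ∈ mapAct g L₂, lf a' b' ^ 2 ∣ p := by
  rintro ⟨a', b', h', hdvd⟩
  have hXcube : subst g (Xv ^ 3) ∈ mapAct g L₂ := mem_mapAct.mpr ⟨Xv ^ 3, mem_L2_left, rfl⟩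
  have hXY2 : subst g (Xv * Yv ^ 2) ∈ mapAct g L₂ :=
    mem_mapAct.mpr ⟨Xv * Yv ^ 2, mem_L2_right, rfl⟩
  have h1 : lf a' b' ^ 2 ∣ lf (-(g.1 0 1)) (g.1 0 0) ^ 3 := by
    have := hdvd _ hXcube
    rwa [map_pow, subst_Xv_lf] at this
  have h2 : lf a' b' ^ 2 ∣ lf (-(g.1 0 1)) (g.1 0 0) * lf (-(g.1 1 1)) (g.1 1 0) ^ 2 := by
    have := hdvd _ hXY2
    rwa [map_mul, map_pow, subst_Xv_lf, subst_Yv_lf] at this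
  have hp' : Prime (lf a' b') := prime_lf h'
  have hd1 : lf a' b' ∣ lf (-(g.1 0 1)) (g.1 0 0) :=
    hp'.dvd_of_dvd_pow (dvd_trans (dvd_pow_self _ two_ne_zero) h1)
  obtain ⟨r, hr⟩ := hd1
  rw [hr] at h2
  have h2' : lf a' b' ∣ r * lf (-(g.1 1 1)) (g.1 1 0) ^ 2 := by
    rw [pow_two, mul_assoc] at h2
    exact (mul_dvd_mul_iff_left (lf_ne_zero h')).mp h2
  rcases (hp'.2.2 _ _ h2') with hr' | hl2
  · have hsq : lf a' b' ^ 2 ∣ lf (-(g.1 0 1)) (g.1 0 0) := by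
      rw [hr, pow_two]
      exact mul_dvd_mul_left _ hr'
    exact sq_lf_not_dvd (row_ne g) hsq
  · have hd2 : lf a' b' ∣ lf (-(g.1 1 1)) (g.1 1 0) := hp'.dvd_of_dvd_pow hl2
    have e1 := lf_dvd_eval_zero (Dvd.intro r hr.symm)
    have e2 := lf_dvd_eval_zero hd2
    rw [eval_lf] at e1 e2
    have hdet := det_eq g
    rcases h' with ha' | hb'
    · exact ha' (by linear_combination g.1 1 1 * e1 - g.1 0 1 * e2 - a' * hdet)
    · exact hb' (by linear_combination g.1 0 0 * e2 - g.1 1 0 * e1 - b' * hdet)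
/-! ### the reverse direction -/

lemma reverse {W : Submodule ℂ P2} (hLag : IsLagrangian W)
    (hroot : ∃ a b : ℂ, (a ≠ 0 ∨ b ≠ 0) ∧ ∀ p ∈ W, lf a b ∣ p)
    (hnod : ¬ ∃ a' b' : ℂ, (a' ≠ 0 ∨ b' ≠ 0) ∧ ∀ p ∈ W, lf a' b' ^ 2 ∣ p) :
    ∃ g : SL2, W = mapAct g L₂ := by
  obtain ⟨a, b, hab, hdvd⟩ := hroot
  obtain ⟨u, v, huv⟩ : ∃ u v : ℂ, b * u - a * v = 1 := by
    rcases ne_or_eq b 0 with hb | rfl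
    · exact ⟨1 / b, 0, by field_simp; ring⟩
    · rcases hab with ha | hcon
      · exact ⟨0, -(1 / a), by field_simp; ring⟩
      · exact absurd rfl hcon
  have hdeth : u * b - a * v = 1 := by linear_combination huv
  set h := mkSL u a v b hdeth with hh
  have h00 : h.1 0 0 = u := rfl
  have h01 : h.1 0 1 = a := rfl
  have h10 : h.1 1 0 = v := rfl
  have h11 : h.1 1 1 = b := rfl
  have hsub_lf : subst h (lf a b) = Xv := by
    rw [subst_lf, h00, h01, h10, h11, show a * b - b * a = 0 by ring, huv, lf01]
  set W' := mapAct h W with hW'def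
  have hW' : IsLagrangian W' := isLagrangian_mapAct hLag h
  have hdiv : ∀ p ∈ W', Xv ∣ p := by
    intro p hp
    obtain ⟨q, hq, rfl⟩ := mem_mapAct.mp hp
    have := map_dvd (subst h) (hdvd q hq)
    rwa [hsub_lf] at this
  have hnod' : ∀ a' b' : ℂ, (a' ≠ 0 ∨ b' ≠ 0) → ¬ (∀ p ∈ W', lf a' b' ^ 2 ∣ p) := by
    intro a' b' h' hall
    apply hnod
    set a'' := a' * (h⁻¹).1 1 1 - b' * (h⁻¹).1 0 1 with ha''
    set b'' := b' * (h⁻¹).1 0 0 - a' * (h⁻¹).1 1 0 with hb''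
    have hsub : subst h⁻¹ (lf a' b') = lf a'' b'' := subst_lf h⁻¹ a' b'
    refine ⟨a'', b'', ?_, ?_⟩
    · by_contra hcon
      push_neg at hcon
      obtain ⟨h1, h2⟩ := hcon
      have hz : lf a' b' = 0 := by
        have := congrArg (subst h) hsub
        rwa [subst_subst_inv, h1, h2, show lf 0 0 = 0 by simp [lf], map_zero] at this
      exact lf_ne_zero h' hz
    · intro p hp
      have hmem : subst h p ∈ W' := mem_mapAct.mpr ⟨p, hp, rfl⟩
      have := map_dvd (subst h⁻¹) (hall _ hmem)
      rwa [map_pow, hsub, subst_inv_subst] at this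
  obtain ⟨hle', hrk', hω'⟩ := hW'
  haveI : FiniteDimensional ℂ W' := Submodule.finiteDimensional_of_le hle'
  let bb := Module.finBasisOfFinrankEq ℂ W' hrk'
  set p₀ : P2 := (bb 0 : P2) with hp₀def
  set p₁ : P2 := (bb 1 : P2) with hp₁def
  have hp₀ : p₀ ∈ W' := (bb 0).2
  have hp₁ : p₁ ∈ W' := (bb 1).2
  have hli : LinearIndependent ℂ ![p₀, p₁] := by
    have h1 : LinearIndependent ℂ (fun i => ((bb i : W') : P2)) :=
      (bb.linearIndependent).map' W'.subtype (Submodule.ker_subtype W')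
    have h2 : ![p₀, p₁] = fun i => ((bb i : W') : P2) := by
      funext i; fin_cases i <;> rfl
    rwa [h2]
  have hpair := LinearIndependent.pair_iff.mp hli
  have hcf03 : ∀ p ∈ W', cf 0 3 p = 0 := by
    intro p hp
    obtain ⟨r, hr⟩ := hdiv p hp
    have he : eval ![0, 1] p = 0 := by rw [hr, map_mul, eval_Xv, zero_mul]
    have hrep := congrArg (eval ![0, 1]) (mem_Vcubic_repr (hle' hp))
    rw [he, eval_combo] at hrep
    norm_num at hrep
    exact hrep.symm
  set α₀ := cf 3 0 p₀ with hα₀def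
  set β₀ := cf 2 1 p₀ with hβ₀def
  set γ₀ := cf 1 2 p₀ with hγ₀def
  set α₁ := cf 3 0 p₁ with hα₁def
  set β₁ := cf 2 1 p₁ with hβ₁def
  set γ₁ := cf 1 2 p₁ with hγ₁def
  have e₀ : p₀ = combo α₀ β₀ γ₀ 0 := by
    have := mem_Vcubic_repr (hle' hp₀); rwa [hcf03 p₀ hp₀] at this
  have e₁ : p₁ = combo α₁ β₁ γ₁ 0 := by
    have := mem_Vcubic_repr (hle' hp₁); rwa [hcf03 p₁ hp₁] at this
  have hL : β₀ * γ₁ - γ₀ * β₁ = 0 := by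
    have hω := hω' p₀ hp₀ p₁ hp₁
    rw [e₀, e₁, omega_combo] at hω
    linear_combination (-3 : ℂ) * hω
  have key : combo 1 0 0 0 ∈ W' ∧ ∃ β γ : ℂ, ¬(β = 0 ∧ γ = 0) ∧ combo 0 β γ 0 ∈ W' := by
    by_cases h₀ : β₀ = 0 ∧ γ₀ = 0
    · obtain ⟨hb0, hg0⟩ := h₀
      have hα₀ : α₀ ≠ 0 := by
        intro hz
        have hzero : (1 : ℂ) • p₀ + (0 : ℂ) • p₁ = 0 := by
          rw [e₀, hb0, hg0, hz, combo_zero]; simp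
        exact one_ne_zero (hpair 1 0 hzero).1
      have hX3 : combo 1 0 0 0 ∈ W' := by
        have := Submodule.smul_mem W' α₀⁻¹ hp₀
        rwa [e₀, hb0, hg0, smul_combo, inv_mul_cancel₀ hα₀, mul_zero] at this
      refine ⟨hX3, β₁, γ₁, ?_, ?_⟩
      · rintro ⟨hb1, hg1⟩
        have hzero : α₁ • p₀ + (-α₀) • p₁ = 0 := by
          rw [e₀, e₁, hb0, hg0, hb1, hg1, smul_combo, smul_combo, combo_add]
          rw [show α₁ * α₀ + -α₀ * α₁ = 0 by ring]
          rw [show α₁ * (0:ℂ) + -α₀ * 0 = 0 by ring]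
          exact combo_zero
        have := (hpair α₁ (-α₀) hzero).2
        exact hα₀ (neg_eq_zero.mp this)
      · have hqeq : combo 0 β₁ γ₁ 0 = p₁ + (-α₁) • combo 1 0 0 0 := by
          rw [e₁, smul_combo, combo_add]
          exact combo_congr (by ring) (by ring) (by ring) (by ring)
        rw [hqeq]
        exact Submodule.add_mem _ hp₁ (Submodule.smul_mem _ _ hX3)
    · have hX3 : combo 1 0 0 0 ∈ W' := by
        rcases ne_or_eq γ₀ 0 with hg | hg
        · set e := γ₀ * α₁ - γ₁ * α₀ with he
          have hr : (-γ₁) • p₀ + γ₀ • p₁ = combo e 0 0 0 := by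
            rw [e₀, e₁, smul_combo, smul_combo, combo_add]
            exact combo_congr (by ring) (by linear_combination -hL) (by ring) (by ring)
          have hene : e ≠ 0 := by
            intro hz
            have hzero : (-γ₁) • p₀ + γ₀ • p₁ = 0 := by rw [hr, hz, combo_zero]
            exact hg (hpair _ _ hzero).2
          have hmem := Submodule.smul_mem W' e⁻¹
            (W'.add_mem (W'.smul_mem (-γ₁) hp₀) (W'.smul_mem γ₀ hp₁))
          rw [hr, smul_combo, inv_mul_cancel₀ hene, mul_zero] at hmem
          exact hmem
        · have hb : β₀ ≠ 0 := fun hbz => h₀ ⟨hbz, hg⟩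
          set e := β₀ * α₁ - β₁ * α₀ with he
          have hr : (-β₁) • p₀ + β₀ • p₁ = combo e 0 0 0 := by
            rw [e₀, e₁, smul_combo, smul_combo, combo_add]
            exact combo_congr (by ring) (by ring) (by linear_combination hL) (by ring)
          have hene : e ≠ 0 := by
            intro hz
            have hzero : (-β₁) • p₀ + β₀ • p₁ = 0 := by rw [hr, hz, combo_zero]
            exact hb (hpair _ _ hzero).2
          have hmem := Submodule.smul_mem W' e⁻¹
            (W'.add_mem (W'.smul_mem (-β₁) hp₀) (W'.smul_mem β₀ hp₁))
          rw [hr, smul_combo, inv_mul_cancel₀ hene, mul_zero] at hmem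
          exact hmem
      refine ⟨hX3, β₀, γ₀, h₀, ?_⟩
      have hqeq : combo 0 β₀ γ₀ 0 = p₀ + (-α₀) • combo 1 0 0 0 := by
        rw [e₀, smul_combo, combo_add]
        exact combo_congr (by ring) (by ring) (by ring) (by ring)
      rw [hqeq]
      exact W'.add_mem hp₀ (W'.smul_mem _ hX3)
  obtain ⟨hX3, β, γ, hβγ, hq⟩ := key
  have hspan : W' = Submodule.span ℂ ({combo 1 0 0 0, combo 0 β γ 0} : Set P2) := by
    have hle2 : Submodule.span ℂ ({combo 1 0 0 0, combo 0 β γ 0} : Set P2) ≤ W' := by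
      rw [Submodule.span_le]
      rintro z hz
      simp only [Set.mem_insert_iff, Set.mem_singleton_iff] at hz
      rcases hz with rfl | rfl
      · exact hX3
      · exact hq
    have hind : LinearIndependent ℂ ![combo 1 0 0 0, combo 0 β γ 0] := by
      rw [LinearIndependent.pair_iff]
      intro s t hst
      rw [smul_combo, smul_combo, combo_add] at hst
      obtain ⟨h1, h2, h3, -⟩ := combo_eq_zero_iff.mp hst
      have hs : s = 0 := by linear_combination h1
      refine ⟨hs, ?_⟩
      rcases not_and_or.mp hβγ with hβ | hγ
      · have : t * β = 0 := by linear_combination h2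
        exact (mul_eq_zero.mp this).resolve_right hβ
      · have : t * γ = 0 := by linear_combination h3
        exact (mul_eq_zero.mp this).resolve_right hγ
    exact (Submodule.eq_of_le_of_finrank_le hle2
      (by rw [hrk', finrank_span_pair hind])).symm
  have hγ : γ ≠ 0 := by
    intro hgz
    apply hnod' 0 1 (Or.inr one_ne_zero)
    intro p hp
    rw [hspan, hgz] at hp
    obtain ⟨s, t, hst⟩ := mem_span_pair'.mp hp
    rw [← hst, lf01]
    have hfac : s • combo 1 0 0 0 + t • combo 0 β 0 0
        = Xv ^ 2 * (C s * Xv + C (t * β) * Yv) := by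
      rw [smul_combo, smul_combo, combo_add, combo]
      simp only [map_mul, map_add, map_zero, map_one, mul_zero, add_zero, zero_add,
        mul_one, zero_mul]
      ring
    rw [hfac]
    exact dvd_mul_right _ _
  set β' := γ⁻¹ * β with hβ'
  have hspan2 : W' = Submodule.span ℂ ({combo 1 0 0 0, combo 0 β' 1 0} : Set P2) := by
    rw [hspan]
    have hsc : combo 0 β' 1 0 = γ⁻¹ • combo 0 β γ 0 := by
      rw [smul_combo]
      exact combo_congr (by ring) rfl (inv_mul_cancel₀ hγ).symm (by ring)
    rw [hsc, span_pair_smul_right _ _ (inv_ne_zero hγ)]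
  set k := β' / 2 with hk
  have hdet2 : (1 : ℂ) * 1 - 0 * k = 1 := by ring
  set g₂ := mkSL 1 0 k 1 hdet2 with hg₂
  have g00 : g₂.1 0 0 = 1 := rfl
  have g01 : g₂.1 0 1 = 0 := rfl
  have g10 : g₂.1 1 0 = k := rfl
  have g11 : g₂.1 1 1 = 1 := rfl
  have himg : mapAct g₂ L₂ = W' := by
    rw [L2_eq, mapAct, Submodule.map_span, Set.image_pair]
    have i1 : (subst g₂).toLinearMap (combo 1 0 0 0) = combo 1 0 0 0 := by
      show subst g₂ (combo 1 0 0 0) = combo 1 0 0 0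
      rw [subst_combo, g00, g01, g10, g11]
      exact combo_congr (by ring) (by ring) (by ring) (by ring)
    have i2 : (subst g₂).toLinearMap (combo 0 0 1 0) = combo (k ^ 2) (2 * k) 1 0 := by
      show subst g₂ (combo 0 0 1 0) = combo (k ^ 2) (2 * k) 1 0
      rw [subst_combo, g00, g01, g10, g11]
      exact combo_congr (by ring) (by ring) (by ring) (by ring)
    rw [i1, i2]
    have hdecomp : combo (k ^ 2) (2 * k) 1 0 = (k ^ 2) • combo 1 0 0 0 + combo 0 β' 1 0 := by
      rw [smul_combo, combo_add]
      exact combo_congr (by ring) (by linear_combination 2 * hk) (by ring) (by ring)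
    rw [hdecomp, span_pair_add_smul_left, ← hspan2]
  refine ⟨g₂ * h⁻¹, ?_⟩
  have hcomp : mapAct h⁻¹ (mapAct g₂ L₂) = mapAct (g₂ * h⁻¹) L₂ := mapAct_mapAct h⁻¹ g₂ L₂
  rw [← hcomp, himg, hW'def, mapAct_mapAct, mul_inv_cancel, mapAct_one]

/-- The `SL(2,ℂ)`-orbit of `span{X³, XY²}` is exactly the set of
Lagrangians `W` of `V` whose elements share a common root but do not share a common double
root. -/
theorem statement7 :
    slOrbit L₂ =
      {W : Submodule ℂ P2 | IsLagrangian W ∧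
        (∃ a b : ℂ, (a ≠ 0 ∨ b ≠ 0) ∧ ∀ p ∈ W, lf a b ∣ p) ∧
        ¬ ∃ a' b' : ℂ, (a' ≠ 0 ∨ b' ≠ 0) ∧ ∀ p ∈ W, lf a' b' ^ 2 ∣ p} := by
  ext W
  constructor
  · rintro ⟨g, rfl⟩
    exact ⟨isLagrangian_mapAct isLagrangian_L2 g, forward_root g, forward_nodouble g⟩
  · rintro ⟨hLag, hroot, hnod⟩
    exact reverse hLag hroot hnod
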